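/- Under U-Topk semantics in a simple probabilistic relation, Faithfulness holds: if t_i ≻ t_j and p(t_i) > p(t_j), and S is a set maximizing Q_k(S) = Σ_{W : top-k(W) = S} Pr(W) with t_j ∈ S, then t_i ∈ S. Key step: for S with t_j ∈ S, t_i ∉ S, the set S' = (S \ {t_j}) ∪ {t_i} satisfies Q_k(S') ≥ Q_k(S)·(p(t_i)(1−p(t_j)))/((1−p(t_i))p(t_j)) > Q_k(S). -/

import Mathlib

open Finset

/-- Faithfulness of U-Topk in a simple probabilistic relation. Key step: for a
candidate answer set `S` containing `tj` but not `ti` (where `ti` has higher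
score and higher probability), the set `S' = (S \ {tj}) ∪ {ti}` satisfies
`Q_k(S') ≥ Q_k(S) · p(ti)(1-p(tj)) / ((1-p(ti))p(tj))`; consequently any set
maximizing `Q_k` that contains `tj` must contain `ti`. -/
theorem uTopk_faithfulness {α : Type*} [DecidableEq α]
    (R : Finset α) (p s : α → ℝ)
    (hp : ∀ t ∈ R, p t ∈ Set.Ioo (0 : ℝ) 1)
    (hs : Set.InjOn s R)
    (k : ℕ) (ti tj : α) (hti : ti ∈ R) (htj : tj ∈ R)
    (hscore : s tj < s ti) (hprob : p tj < p ti)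
    (Q : Finset α → ℝ)
    (hQ : ∀ S, Q S =
      ∑ W ∈ R.powerset.filter (fun W =>
          W.filter (fun t => (W.filter (fun t' => s t < s t')).card < k) = S),
        (∏ t ∈ W, p t) * ∏ t ∈ R \ W, (1 - p t)) :
    (∀ S ⊆ R, tj ∈ S → ti ∉ S →
      Q S * (p ti * (1 - p tj)) / ((1 - p ti) * p tj) ≤ Q (insert ti (S.erase tj))) ∧
    (∀ S ⊆ R, (∀ T ⊆ R, Q T ≤ Q S) → tj ∈ S → ti ∈ S) := by
  obtain ⟨hpi0, hpi1⟩ := hp ti hti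
  obtain ⟨hpj0, hpj1⟩ := hp tj htj
  have hij : ti ≠ tj := by rintro rfl; exact lt_irrefl _ hscore
  have hB : (0:ℝ) < (1 - p ti) * p tj := mul_pos (by linarith) hpj0
  set F : Finset α → Finset α := fun W =>
    W.filter (fun t => (W.filter (fun t' => s t < s t')).card < k) with hF
  set f : Finset α → Finset α := fun W => insert ti (W.erase tj) with hf
  have hpr_nonneg : ∀ W : Finset α, W ⊆ R →
      0 ≤ (∏ t ∈ W, p t) * ∏ t ∈ R \ W, (1 - p t) := by
    intro W hWR
    apply mul_nonneg
    · exact Finset.prod_nonneg fun t ht => (hp t (hWR ht)).1.le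
    · exact Finset.prod_nonneg fun t ht => by
        have := (hp t (Finset.mem_sdiff.mp ht).1).2; linarith
  have key : ∀ S ⊆ R, tj ∈ S → ti ∉ S →
      Q S * (p ti * (1 - p tj)) / ((1 - p ti) * p tj) ≤ Q (insert ti (S.erase tj)) := by
    intro S hSR hjS hiS
    -- mapping lemma
    have hmap : ∀ W, W ⊆ R → F W = S →
        (f W ⊆ R ∧ tj ∈ W ∧ ti ∉ W ∧ F (f W) = insert ti (S.erase tj)) := by
      intro W hWR hFW
      have hjW' : tj ∈ W ∧ (W.filter (fun t' => s tj < s t')).card < k := by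
        have h := hjS; rw [← hFW] at h
        simpa only [hF, Finset.mem_filter] using h
      obtain ⟨hjW, hcj⟩ := hjW'
      have hci : (W.filter (fun t' => s ti < s t')).card < k := by
        refine lt_of_le_of_lt (Finset.card_le_card ?_) hcj
        intro x hx
        rw [Finset.mem_filter] at hx ⊢
        exact ⟨hx.1, hscore.trans hx.2⟩
      have hiW : ti ∉ W := by
        intro hiW
        apply hiS
        rw [← hFW]
        simp only [hF, Finset.mem_filter]
        exact ⟨hiW, hci⟩
      have hfWR : f W ⊆ R :=
        Finset.insert_subset hti ((Finset.erase_subset _ _).trans hWR)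
      -- filter of f W
      have hfilt : ∀ t, (f W).filter (fun t' => s t < s t') =
          if s t < s ti then insert ti ((W.filter (fun t' => s t < s t')).erase tj)
          else (W.filter (fun t' => s t < s t')).erase tj := by
        intro t
        simp only [hf, Finset.filter_insert, Finset.filter_erase]
      have htiF : ∀ t : α, ti ∉ (W.filter (fun t' => s t < s t')).erase tj := by
        intro t h
        exact hiW (Finset.mem_of_mem_filter ti (Finset.mem_of_mem_erase h))
      have hcard : ∀ t, ((f W).filter (fun t' => s t < s t')).card =
          ((W.filter (fun t' => s t < s t')).card + (if s t < s ti then 1 else 0))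
            - (if s t < s tj then 1 else 0) := by
        intro t
        rw [hfilt t]
        by_cases h1 : s t < s ti
        · rw [if_pos h1, if_pos h1, Finset.card_insert_of_notMem (htiF t)]
          by_cases h2 : s t < s tj
          · have hmemj : tj ∈ W.filter (fun t' => s t < s t') :=
              Finset.mem_filter.mpr ⟨hjW, h2⟩
            have h1le : 1 ≤ (W.filter (fun t' => s t < s t')).card :=
              Finset.card_pos.mpr ⟨tj, hmemj⟩
            rw [if_pos h2, Finset.card_erase_of_mem hmemj]
            omega
          · have hnm : tj ∉ W.filter (fun t' => s t < s t') :=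
              fun h => h2 (Finset.mem_filter.mp h).2
            rw [if_neg h2, Finset.erase_eq_of_notMem hnm]
            omega
        · have h2 : ¬ s t < s tj := fun h2 => h1 (h2.trans hscore)
          have hnm : tj ∉ W.filter (fun t' => s t < s t') :=
            fun h => h2 (Finset.mem_filter.mp h).2
          rw [if_neg h1, if_neg h1, if_neg h2, Finset.erase_eq_of_notMem hnm]
          omega
      refine ⟨hfWR, hjW, hiW, ?_⟩
      ext t
      by_cases hti' : t = ti
      · rw [hti']
        have hc : ((f W).filter (fun t' => s ti < s t')).card < k := by
          rw [hcard ti, if_neg (lt_irrefl _),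
            if_neg (fun h : s ti < s tj => lt_irrefl _ (h.trans hscore))]
          simpa using hci
        have hmem : ti ∈ f W := by simp [hf]
        simp only [hF, Finset.mem_filter]
        exact iff_of_true ⟨hmem, hc⟩ (Finset.mem_insert_self _ _)
      · by_cases htj' : t = tj
        · rw [htj']
          have hL : tj ∉ f W := by
            simp only [hf, Finset.mem_insert, Finset.mem_erase]
            push_neg
            exact ⟨fun h => (hij h.symm), fun h => absurd rfl h⟩
          have hR : tj ∉ insert ti (S.erase tj) := by
            simp [hij.symm]
          simp only [hF, Finset.mem_filter]
          exact iff_of_false (fun h => hL h.1) hR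
        · -- t ≠ ti, t ≠ tj
          have hmemfW : t ∈ f W ↔ t ∈ W := by
            simp [hf, hti', htj']
          have hmemS' : t ∈ insert ti (S.erase tj) ↔ t ∈ S := by
            simp [hti', htj']
          have hmemS : t ∈ S ↔ t ∈ W ∧ (W.filter (fun t' => s t < s t')).card < k := by
            rw [← hFW]; simp only [hF, Finset.mem_filter]
          simp only [hF, Finset.mem_filter, hmemfW, hmemS', hmemS, hcard t]
          constructor
          · rintro ⟨htW, hc⟩
            refine ⟨htW, ?_⟩
            by_cases h2 : s t < s tj
            · rw [if_pos (h2.trans hscore), if_pos h2] at hc; omega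
            · rw [if_neg h2] at hc
              by_cases h1 : s t < s ti
              · rw [if_pos h1] at hc; omega
              · rw [if_neg h1] at hc; omega
          · rintro ⟨htW, hc⟩
            refine ⟨htW, ?_⟩
            have hstj : s t ≠ s tj := fun h => htj' (hs (hWR htW) htj h)
            by_cases h1 : s t < s ti
            · by_cases h2 : s t < s tj
              · simp only [if_pos h1, if_pos h2]; omega
              · -- s tj < s t < s ti : card t + 1 ≤ card tj
                have hjt : s tj < s t := lt_of_le_of_ne (not_lt.mp h2) hstj.symm
                have hsub : insert t (W.filter (fun t' => s t < s t')) ⊆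
                    W.filter (fun t' => s tj < s t') := by
                  intro x hx
                  rw [Finset.mem_insert] at hx
                  rcases hx with rfl | hx
                  · exact Finset.mem_filter.mpr ⟨htW, hjt⟩
                  · rw [Finset.mem_filter] at hx ⊢
                    exact ⟨hx.1, hjt.trans hx.2⟩
                have hni : t ∉ W.filter (fun t' => s t < s t') :=
                  fun h => lt_irrefl _ (Finset.mem_filter.mp h).2
                have hle : (W.filter (fun t' => s t < s t')).card + 1 ≤
                    (W.filter (fun t' => s tj < s t')).card := by
                  have := Finset.card_le_card hsub
                  rwa [Finset.card_insert_of_notMem hni] at this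
                simp only [if_pos h1, if_neg h2]
                omega
            · have h2 : ¬ s t < s tj := fun h2 => h1 (h2.trans hscore)
              simp only [if_neg h1, if_neg h2]; omega
    -- probability lemma
    have hpr : ∀ W, W ⊆ R → tj ∈ W → ti ∉ W →
        ((∏ t ∈ f W, p t) * ∏ t ∈ R \ f W, (1 - p t)) * ((1 - p ti) * p tj)
          = ((∏ t ∈ W, p t) * ∏ t ∈ R \ W, (1 - p t)) * (p ti * (1 - p tj)) := by
      intro W hWR hjW hiW
      have h1 : ∏ t ∈ f W, p t = p ti * ∏ t ∈ W.erase tj, p t :=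
        Finset.prod_insert (fun h => hiW (Finset.mem_of_mem_erase h))
      have h2 : ∏ t ∈ W, p t = p tj * ∏ t ∈ W.erase tj, p t :=
        (Finset.mul_prod_erase _ _ hjW).symm
      have hRd : R \ f W = insert tj ((R \ W).erase ti) := by
        have hti' : ti ∈ f W := Finset.mem_insert_self _ _
        have htj'' : tj ∉ f W := by
          simp only [hf, Finset.mem_insert, Finset.mem_erase]
          push_neg
          exact ⟨fun h => hij h.symm, fun h => absurd rfl h⟩
        ext x
        by_cases hx1 : x = ti
        · subst hx1
          simp [Finset.mem_sdiff, hti', hij]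
        · by_cases hx2 : x = tj
          · subst hx2
            simp [Finset.mem_sdiff, htj'', htj]
          · have hxm : x ∈ f W ↔ x ∈ W := by simp [hf, hx1, hx2]
            simp [Finset.mem_sdiff, Finset.mem_insert, Finset.mem_erase, hx1, hx2, hxm]
      have htjd : tj ∉ (R \ W).erase ti := by
        intro h
        exact (Finset.mem_sdiff.mp (Finset.mem_of_mem_erase h)).2 hjW
      have htid : ti ∈ R \ W := Finset.mem_sdiff.mpr ⟨hti, hiW⟩
      have h3 : ∏ t ∈ R \ f W, (1 - p t) =
          (1 - p tj) * ∏ t ∈ (R \ W).erase ti, (1 - p t) := by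
        rw [hRd, Finset.prod_insert htjd]
      have h4 : ∏ t ∈ R \ W, (1 - p t) =
          (1 - p ti) * ∏ t ∈ (R \ W).erase ti, (1 - p t) :=
        (Finset.mul_prod_erase _ _ htid).symm
      rw [h1, h2, h3, h4]; ring
    rw [div_le_iff₀ hB]
    have hQfs : Q S * (p ti * (1 - p tj)) =
        (∑ W ∈ R.powerset.filter (fun W => F W = S),
          (∏ t ∈ f W, p t) * ∏ t ∈ R \ f W, (1 - p t)) * ((1 - p ti) * p tj) := by
      rw [hQ S, Finset.sum_mul, Finset.sum_mul]
      refine Finset.sum_congr rfl fun W hW => ?_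
      simp only [Finset.mem_filter, Finset.mem_powerset] at hW
      obtain ⟨_, hjW, hiW, _⟩ := hmap W hW.1 hW.2
      exact (hpr W hW.1 hjW hiW).symm
    rw [hQfs]
    apply mul_le_mul_of_nonneg_right _ hB.le
    rw [hQ (insert ti (S.erase tj))]
    have hinj : ∀ W1 ∈ R.powerset.filter (fun W => F W = S),
        ∀ W2 ∈ R.powerset.filter (fun W => F W = S), f W1 = f W2 → W1 = W2 := by
      intro W1 h1 W2 h2 hfe
      simp only [Finset.mem_filter, Finset.mem_powerset] at h1 h2
      obtain ⟨_, hj1, hi1, _⟩ := hmap W1 h1.1 h1.2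
      obtain ⟨_, hj2, hi2, _⟩ := hmap W2 h2.1 h2.2
      have he : W1.erase tj = W2.erase tj := by
        have h := congrArg (fun X => X.erase ti) hfe
        simp only [hf] at h
        rwa [Finset.erase_insert (fun h => hi1 (Finset.mem_of_mem_erase h)),
          Finset.erase_insert (fun h => hi2 (Finset.mem_of_mem_erase h))] at h
      rw [← Finset.insert_erase hj1, he, Finset.insert_erase hj2]
    have himg : ∑ W ∈ (R.powerset.filter (fun W => F W = S)).image f,
        (∏ t ∈ W, p t) * ∏ t ∈ R \ W, (1 - p t)
        = ∑ W ∈ R.powerset.filter (fun W => F W = S),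
            (∏ t ∈ f W, p t) * ∏ t ∈ R \ f W, (1 - p t) :=
      Finset.sum_image hinj
    rw [← himg]
    apply Finset.sum_le_sum_of_subset_of_nonneg
    · intro W' hW'
      rw [Finset.mem_image] at hW'
      obtain ⟨W, hW, rfl⟩ := hW'
      simp only [Finset.mem_filter, Finset.mem_powerset] at hW ⊢
      obtain ⟨hfWR, _, _, hFf⟩ := hmap W hW.1 hW.2
      exact ⟨hfWR, hFf⟩
    · intro W' hW' _
      simp only [Finset.mem_filter, Finset.mem_powerset] at hW'
      exact hpr_nonneg _ hW'.1
  refine ⟨key, ?_⟩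
  intro S hSR hmax hjS
  by_contra hiS
  have h1 := key S hSR hjS hiS
  have hS'R : insert ti (S.erase tj) ⊆ R :=
    Finset.insert_subset hti ((Finset.erase_subset _ _).trans hSR)
  have h2 := hmax _ hS'R
  have hQpos : 0 < Q S := by
    have hFR : F R ⊆ R := by simp only [hF]; exact Finset.filter_subset _ _
    have hRmem : R ∈ R.powerset.filter (fun W =>
        W.filter (fun t => (W.filter (fun t' => s t < s t')).card < k) = F R) := by
      exact Finset.mem_filter.mpr ⟨Finset.mem_powerset_self R, rfl⟩
    have hprR : (0:ℝ) < (∏ t ∈ R, p t) * ∏ t ∈ R \ R, (1 - p t) := by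
      rw [Finset.sdiff_self, Finset.prod_empty, mul_one]
      exact Finset.prod_pos fun t ht => (hp t ht).1
    have hle : (∏ t ∈ R, p t) * ∏ t ∈ R \ R, (1 - p t) ≤ Q (F R) := by
      rw [hQ (F R)]
      refine Finset.single_le_sum (f := fun W => (∏ t ∈ W, p t) * ∏ t ∈ R \ W, (1 - p t))
        (fun W hW => ?_) hRmem
      simp only [Finset.mem_filter, Finset.mem_powerset] at hW
      exact hpr_nonneg _ hW.1
    have := hmax (F R) hFR
    linarith
  have hle : Q S * (p ti * (1 - p tj)) ≤ Q S * ((1 - p ti) * p tj) := by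
    have := h1.trans h2
    rw [div_le_iff₀ hB] at this
    linarith
  nlinarith [mul_pos hQpos (show (0:ℝ) < p ti - p tj by linarith)]
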